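/- Let β, γ ∈ [0,1), T > 0, and set κ = max(β, γ). There exists a modulus of continuity ω (depending only on β, γ, T) such that for any 0 ≤ t ≤ t' ≤ T, any k ∈ ℕ, and any continuous v : [t, t'] → ℝ^k, the function v̂(τ) = (τ - t)^κ ∫_t^τ (τ - ξ)^{-β} (ξ - t)^{-γ} v(ξ) dξ satisfies ‖v̂(τ') - v̂(τ)‖ ≤ ‖v‖_∞ · ω(|τ' - τ|) for all τ, τ' ∈ [t, t']. -/

import Mathlib

open MeasureTheory Set intervalIntegral
open scoped NNReal

set_option linter.unusedVariables false
set_option linter.unusedSectionVars false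
set_option maxHeartbeats 1000000

noncomputable def s5eta (b c : ℝ) : ℝ := min (1-b) (1-c) / 2
noncomputable def s5mu (b c : ℝ) : ℝ := 1 + max b c - b - c
open Classical in
noncomputable def s5rho (b c : ℝ) : ℝ :=
  if 0 < max b c then min (max b c) (s5mu b c / 2) else s5eta b c
noncomputable def s5Cf (b c : ℝ) : ℝ := 2 * (1/(1-b) + 1/(1-c))
noncomputable def s5omega (b c T d : ℝ) : ℝ :=
  (s5Cf b c * T ^ (s5mu b c - s5rho b c)) * (max d 0) ^ (s5rho b c)
  + (T ^ (max b c - c) / (1-b)) * (max d 0) ^ (1-b)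
  + (s5Cf (b + s5eta b c) c * T ^ (s5mu b c - s5eta b c)) * (max d 0) ^ (s5eta b c)

section props
variable {b c : ℝ} (hb0 : 0 ≤ b) (hb1 : b < 1) (hc0 : 0 ≤ c) (hc1 : c < 1)

include hb1 hc1 in
lemma s5eta_pos : 0 < s5eta b c := by
  rw [s5eta]; rcases le_total (1-b) (1-c) with h | h
  · rw [min_eq_left h]; linarith
  · rw [min_eq_right h]; linarith

include hb0 hc0 in
lemma s5eta_le_one : s5eta b c ≤ 1 := by
  rw [s5eta]; rcases le_total (1-b) (1-c) with h | h
  · rw [min_eq_left h]; linarith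
  · rw [min_eq_right h]; linarith

lemma s5eta_le_b : 2 * s5eta b c ≤ 1 - b := by
  rw [s5eta]; rcases le_total (1-b) (1-c) with h | h
  · rw [min_eq_left h]; linarith
  · rw [min_eq_right h]; linarith

lemma s5mu_ge_b : 1 - b ≤ s5mu b c := by
  rw [s5mu]; have := le_max_right b c; linarith [le_max_left b c]

lemma s5mu_ge_c : 1 - c ≤ s5mu b c := by
  rw [s5mu]; linarith [le_max_left b c]

include hb1 hc1 in
lemma s5mu_pos : 0 < s5mu b c := lt_of_lt_of_le (by linarith) s5mu_ge_b

include hb1 hc1 in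
lemma s5rho_pos : 0 < s5rho b c := by
  rw [s5rho]; split_ifs with h
  · exact lt_min h (by linarith [s5mu_pos hb1 hc1])
  · exact s5eta_pos hb1 hc1

include hb1 hc1 in
lemma s5rho_le_halfmu : s5rho b c ≤ s5mu b c / 2 := by
  rw [s5rho]; split_ifs with h
  · exact min_le_right _ _
  · have h1 := s5eta_le_b (b := b) (c := c)
    have h2 := s5mu_ge_b (b := b) (c := c)
    rw [s5eta] at *; linarith

include hb1 hc1 in
lemma s5Cf_nonneg : 0 ≤ s5Cf b c := by
  rw [s5Cf]
  have h1 : (0:ℝ) < 1 - b := by linarith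
  have h2 : (0:ℝ) < 1 - c := by linarith
  positivity
end props

lemma s5_rpow_subadd {x y p : ℝ} (hx : 0 ≤ x) (hy : 0 ≤ y) (hp : 0 ≤ p) (hp1 : p ≤ 1) :
    (x + y) ^ p ≤ x ^ p + y ^ p := by
  have h := NNReal.rpow_add_le_add_rpow x.toNNReal y.toNNReal hp hp1
  have h2 : ((x.toNNReal + y.toNNReal : ℝ≥0) : ℝ) = x + y := by
    push_cast [Real.coe_toNNReal x hx, Real.coe_toNNReal y hy]; ring
  calc (x + y) ^ p = (((x.toNNReal + y.toNNReal : ℝ≥0) : ℝ)) ^ p := by rw [h2]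
    _ = (((x.toNNReal + y.toNNReal) ^ p : ℝ≥0) : ℝ) := by rw [NNReal.coe_rpow]
    _ ≤ ((x.toNNReal ^ p + y.toNNReal ^ p : ℝ≥0) : ℝ) := by exact_mod_cast h
    _ = x ^ p + y ^ p := by
        push_cast [NNReal.coe_rpow, Real.coe_toNNReal x hx, Real.coe_toNNReal y hy]; ring

lemma s5_min_one_le_rpow {q η : ℝ} (hq : 0 ≤ q) (h0 : 0 ≤ η) (h1 : η ≤ 1) :
    min 1 q ≤ q ^ η := by
  rcases eq_or_lt_of_le hq with h | h
  · have : min 1 q = 0 := by rw [← h]; simp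
    rw [this, ← h]
    exact Real.zero_rpow_nonneg η
  rcases le_total q 1 with h2 | h2
  · have h3 : q ^ (1:ℝ) ≤ q ^ η := Real.rpow_le_rpow_of_exponent_ge h h2 h1
    rw [Real.rpow_one] at h3
    rw [min_eq_right h2]; exact h3
  · rw [min_eq_left h2]
    exact Real.one_le_rpow h2 h0

lemma s5_rpow_neg_sub_le {a c b η : ℝ} (ha : 0 < a) (hac : a ≤ c)
    (hb : 0 ≤ b) (hb1 : b ≤ 1) (h0 : 0 ≤ η) (h1 : η ≤ 1) :
    a ^ (-b) - c ^ (-b) ≤ (c - a) ^ η * a ^ (-b - η) := by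
  have hc : 0 < c := lt_of_lt_of_le ha hac
  have hab : (0:ℝ) ≤ a ^ (-b) := Real.rpow_nonneg ha.le _
  have h2 : a ^ (-b) * (a / c) ≤ c ^ (-b) := by
    have hx : a / c ≤ 1 := div_le_one_of_le₀ hac hc.le
    have hx0 : 0 < a / c := div_pos ha hc
    have h3 : (a/c) ^ (1:ℝ) ≤ (a/c) ^ b := Real.rpow_le_rpow_of_exponent_ge hx0 hx hb1
    rw [Real.rpow_one] at h3
    have hid : a ^ (-b) * (a/c) ^ b = c ^ (-b) := by
      rw [Real.div_rpow ha.le hc.le, Real.rpow_neg ha.le, Real.rpow_neg hc.le]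
      have hab' : a ^ b ≠ 0 := ne_of_gt (Real.rpow_pos_of_pos ha b)
      field_simp
    calc a ^ (-b) * (a / c) ≤ a ^ (-b) * (a/c) ^ b := by
          exact mul_le_mul_of_nonneg_left h3 hab
      _ = c ^ (-b) := hid
  have h3 : 1 - a/c ≤ min 1 ((c-a)/a) := by
    refine le_min ?_ ?_
    · have : 0 ≤ a / c := (div_pos ha hc).le
      linarith
    · have e1 : 1 - a/c = (c-a)/c := by field_simp
      rw [e1]
      exact div_le_div_of_nonneg_left (by linarith) ha hac
  have h4 : min 1 ((c-a)/a) ≤ ((c-a)/a) ^ η :=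
    s5_min_one_le_rpow (div_nonneg (by linarith) ha.le) h0 h1
  have h5 : a ^ (-b) * ((c-a)/a) ^ η = (c-a) ^ η * a ^ (-b - η) := by
    rw [Real.div_rpow (by linarith) ha.le]
    rw [show (-b - η) = -b + -η by ring, Real.rpow_add ha, Real.rpow_neg ha.le η]
    ring
  calc a ^ (-b) - c ^ (-b) ≤ a ^ (-b) - a ^ (-b) * (a/c) := by linarith
    _ = a ^ (-b) * (1 - a/c) := by ring
    _ ≤ a ^ (-b) * min 1 ((c-a)/a) := mul_le_mul_of_nonneg_left h3 hab
    _ ≤ a ^ (-b) * ((c-a)/a) ^ η := mul_le_mul_of_nonneg_left h4 hab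
    _ = (c-a) ^ η * a ^ (-b - η) := h5

lemma s5_integral_left {c a x : ℝ} (hc : c < 1) :
    ∫ ξ in a..x, (ξ - a) ^ (-c) = (x - a) ^ (1 - c) / (1 - c) := by
  have h := intervalIntegral.integral_comp_sub_right (a := a) (b := x)
    (fun ξ => ξ ^ (-c)) a
  rw [h, sub_self, integral_rpow (Or.inl (by linarith : (-1:ℝ) < -c)),
    Real.zero_rpow (by linarith : -c + 1 ≠ 0)]
  rw [show -c + 1 = 1 - c by ring]
  ring

lemma s5_integral_right {b a x : ℝ} (hb : b < 1) :
    ∫ ξ in a..x, (x - ξ) ^ (-b) = (x - a) ^ (1 - b) / (1 - b) := by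
  have h := intervalIntegral.integral_comp_sub_left (a := a) (b := x)
    (fun ξ => ξ ^ (-b)) x
  rw [h, sub_self, integral_rpow (Or.inl (by linarith : (-1:ℝ) < -b)),
    Real.zero_rpow (by linarith : -b + 1 ≠ 0)]
  rw [show -b + 1 = 1 - b by ring]
  ring

lemma s5_intInt_left {c a : ℝ} (p q : ℝ) (hc : c < 1) :
    IntervalIntegrable (fun ξ => (ξ - a) ^ (-c)) volume p q := by
  have h := (intervalIntegrable_rpow' (a := p - a) (b := q - a)
    (by linarith : (-1:ℝ) < -c)).comp_sub_right a
  simpa using h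

lemma s5_intInt_right {b x : ℝ} (p q : ℝ) (hb : b < 1) :
    IntervalIntegrable (fun ξ => (x - ξ) ^ (-b)) volume p q := by
  have h := (intervalIntegrable_rpow' (a := x - p) (b := x - q)
    (by linarith : (-1:ℝ) < -b)).comp_sub_left x
  simpa using h

lemma s5_intInt_empty {f : ℝ → ℝ} {a : ℝ} : IntervalIntegrable f volume a a := by
  rw [intervalIntegrable_iff]
  have : Set.uIoc a a = ∅ := by simp [Set.uIoc]
  rw [this]
  exact integrableOn_empty

lemma s5_kernel_integrable {b c t x : ℝ} (hb : b < 1) (hc : c < 1) (htx : t ≤ x) :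
    IntervalIntegrable (fun ξ => (x - ξ) ^ (-b) * (ξ - t) ^ (-c)) volume t x := by
  rcases eq_or_lt_of_le htx with rfl | h
  · exact s5_intInt_empty
  set m := (t + x) / 2 with hm
  have hm1 : t < m := by rw [hm]; linarith
  have hm2 : m < x := by rw [hm]; linarith
  have I1 : IntervalIntegrable (fun ξ => (x - ξ) ^ (-b) * (ξ - t) ^ (-c)) volume t m := by
    apply IntervalIntegrable.continuousOn_mul (s5_intInt_left t m hc)
    apply ContinuousOn.rpow_const (by fun_prop)
    intro ξ hξ
    rw [uIcc_of_le hm1.le] at hξ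
    left
    have := hξ.2
    intro hne
    have : ξ = x := by linarith [sub_eq_zero.mp hne]
    linarith [hξ.2, hm2]
  have I2 : IntervalIntegrable (fun ξ => (x - ξ) ^ (-b) * (ξ - t) ^ (-c)) volume m x := by
    apply IntervalIntegrable.mul_continuousOn (s5_intInt_right m x hb)
    apply ContinuousOn.rpow_const (by fun_prop)
    intro ξ hξ
    rw [uIcc_of_le hm2.le] at hξ
    left
    intro hne
    have : ξ = t := by linarith [sub_eq_zero.mp hne]
    linarith [hξ.1, hm1]
  exact I1.trans I2

lemma s5_beta_le {b c t x : ℝ} (hb0 : 0 ≤ b) (hb : b < 1) (hc0 : 0 ≤ c) (hc : c < 1)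
    (htx : t ≤ x) :
    ∫ ξ in t..x, (x - ξ) ^ (-b) * (ξ - t) ^ (-c)
      ≤ (2 * (1/(1-b) + 1/(1-c))) * (x - t) ^ (1-b-c) := by
  have hb' : (0:ℝ) < 1 - b := by linarith
  have hc' : (0:ℝ) < 1 - c := by linarith
  have hC0 : (0:ℝ) ≤ 1/(1-b) + 1/(1-c) := by positivity
  rcases eq_or_lt_of_le htx with rfl | hlt
  · rw [integral_same]
    exact mul_nonneg (by linarith) (Real.rpow_nonneg (by linarith) _)
  set m := (t + x) / 2 with hm
  set h : ℝ := (x - t) / 2 with hh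
  have hh0 : 0 < h := by rw [hh]; linarith
  have hmt : m - t = h := by rw [hm, hh]; ring
  have hxm : x - m = h := by rw [hm, hh]; ring
  have hker := s5_kernel_integrable (t := t) (x := x) hb hc htx
  have hker1 : IntervalIntegrable (fun ξ => (x - ξ) ^ (-b) * (ξ - t) ^ (-c)) volume t m :=
    hker.mono_set (by
      rw [uIcc_of_le (show t ≤ m by linarith), uIcc_of_le htx]
      exact Icc_subset_Icc le_rfl (by linarith))
  have hker2 : IntervalIntegrable (fun ξ => (x - ξ) ^ (-b) * (ξ - t) ^ (-c)) volume m x :=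
    hker.mono_set (by
      rw [uIcc_of_le (show m ≤ x by linarith), uIcc_of_le htx]
      exact Icc_subset_Icc (by linarith) le_rfl)
  have split : (∫ ξ in t..m, (x - ξ) ^ (-b) * (ξ - t) ^ (-c))
      + (∫ ξ in m..x, (x - ξ) ^ (-b) * (ξ - t) ^ (-c))
      = ∫ ξ in t..x, (x - ξ) ^ (-b) * (ξ - t) ^ (-c) :=
    integral_add_adjacent_intervals hker1 hker2
  have piece1 : (∫ ξ in t..m, (x - ξ) ^ (-b) * (ξ - t) ^ (-c))
      ≤ h ^ (-b) * (h ^ (1-c) / (1-c)) := by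
    have mono : (∫ ξ in t..m, (x - ξ) ^ (-b) * (ξ - t) ^ (-c))
        ≤ ∫ ξ in t..m, h ^ (-b) * (ξ - t) ^ (-c) := by
      apply integral_mono_on (by linarith) hker1 ((s5_intInt_left t m hc).const_mul _)
      intro ξ hξ
      have h1 : h ≤ x - ξ := by
        have h3 := hξ.2; rw [hm] at h3; rw [hh]; linarith
      have h2 : (x - ξ) ^ (-b) ≤ h ^ (-b) :=
        Real.rpow_le_rpow_of_nonpos hh0 h1 (by linarith)
      exact mul_le_mul_of_nonneg_right h2 (Real.rpow_nonneg (by linarith [hξ.1]) _)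
    rw [intervalIntegral.integral_const_mul, s5_integral_left hc, hmt] at mono
    exact mono
  have piece2 : (∫ ξ in m..x, (x - ξ) ^ (-b) * (ξ - t) ^ (-c))
      ≤ (h ^ (1-b) / (1-b)) * h ^ (-c) := by
    have mono : (∫ ξ in m..x, (x - ξ) ^ (-b) * (ξ - t) ^ (-c))
        ≤ ∫ ξ in m..x, (x - ξ) ^ (-b) * h ^ (-c) := by
      apply integral_mono_on (by linarith) hker2 ((s5_intInt_right m x hb).mul_const _)
      intro ξ hξ
      have h1 : h ≤ ξ - t := by
        have h3 := hξ.1; rw [hm] at h3; rw [hh]; linarith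
      have h2 : (ξ - t) ^ (-c) ≤ h ^ (-c) :=
        Real.rpow_le_rpow_of_nonpos hh0 h1 (by linarith)
      exact mul_le_mul_of_nonneg_left h2 (Real.rpow_nonneg (by linarith [hξ.2]) _)
    rw [intervalIntegral.integral_mul_const, s5_integral_right hb, hxm] at mono
    exact mono
  have e1 : h ^ (-b) * (h ^ (1-c) / (1-c)) = h ^ (1-b-c) * (1/(1-c)) := by
    rw [show (1-b-c) = -b + (1-c) by ring, Real.rpow_add hh0]; ring
  have e2 : (h ^ (1-b) / (1-b)) * h ^ (-c) = h ^ (1-b-c) * (1/(1-b)) := by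
    rw [show (1-b-c) = (1-b) + -c by ring, Real.rpow_add hh0]; ring
  have hhle : h ^ (1-b-c) ≤ 2 * (x-t) ^ (1-b-c) := by
    have eh : h ^ (1-b-c) = (x-t) ^ (1-b-c) * ((2:ℝ) ^ (1-b-c))⁻¹ := by
      rw [hh, Real.div_rpow (by linarith) (by norm_num), div_eq_mul_inv]
    have h2e : ((2:ℝ) ^ (1-b-c))⁻¹ = (2:ℝ) ^ (-(1-b-c)) :=
      (Real.rpow_neg (by norm_num) _).symm
    have h2le : (2:ℝ) ^ (-(1-b-c)) ≤ 2 := by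
      calc (2:ℝ) ^ (-(1-b-c)) ≤ (2:ℝ) ^ (1:ℝ) :=
            Real.rpow_le_rpow_of_exponent_le (by norm_num) (by linarith)
        _ = 2 := Real.rpow_one 2
    rw [eh, h2e]
    calc (x-t) ^ (1-b-c) * (2:ℝ) ^ (-(1-b-c)) ≤ (x-t) ^ (1-b-c) * 2 :=
          mul_le_mul_of_nonneg_left h2le (Real.rpow_nonneg (by linarith) _)
      _ = 2 * (x-t) ^ (1-b-c) := by ring
  calc ∫ ξ in t..x, (x - ξ) ^ (-b) * (ξ - t) ^ (-c)
      = (∫ ξ in t..m, (x - ξ) ^ (-b) * (ξ - t) ^ (-c))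
        + ∫ ξ in m..x, (x - ξ) ^ (-b) * (ξ - t) ^ (-c) := split.symm
    _ ≤ h ^ (-b) * (h ^ (1-c) / (1-c)) + (h ^ (1-b) / (1-b)) * h ^ (-c) :=
        add_le_add piece1 piece2
    _ = (1/(1-b) + 1/(1-c)) * h ^ (1-b-c) := by rw [e1, e2]; ring
    _ ≤ (1/(1-b) + 1/(1-c)) * (2 * (x-t) ^ (1-b-c)) :=
        mul_le_mul_of_nonneg_left hhle hC0
    _ = (2 * (1/(1-b) + 1/(1-c))) * (x - t) ^ (1-b-c) := by ring

lemma s5_ae_Ioc {p q : ℝ} {P : ℝ → Prop} (h : ∀ ξ ∈ Ioo p q, P ξ) :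
    ∀ᵐ ξ ∂(volume.restrict (Ioc p q)), P ξ := by
  rw [← Measure.restrict_congr_set Ioo_ae_eq_Ioc]
  filter_upwards [ae_restrict_mem measurableSet_Ioo] with ξ hξ using h ξ hξ

lemma s5_ae_Icc {p q : ℝ} {P : ℝ → Prop} (h : ∀ ξ ∈ Ioo p q, P ξ) :
    ∀ᵐ ξ ∂(volume.restrict (Icc p q)), P ξ := by
  rw [← Measure.restrict_congr_set Ioo_ae_eq_Icc]
  filter_upwards [ae_restrict_mem measurableSet_Ioo] with ξ hξ using h ξ hξ

lemma s5_intInt_of_bound {E : Type*} [NormedAddCommGroup E] {F : ℝ → E} {g : ℝ → ℝ}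
    {p q : ℝ} (hpq : p ≤ q)
    (hF : AEStronglyMeasurable F (volume.restrict (Ioc p q)))
    (hg : IntervalIntegrable g volume p q)
    (hle : ∀ ξ ∈ Ioo p q, ‖F ξ‖ ≤ g ξ) : IntervalIntegrable F volume p q := by
  apply hg.mono_fun
  · rwa [uIoc_of_le hpq]
  · rw [uIoc_of_le hpq]
    exact s5_ae_Ioc fun ξ hξ => (hle ξ hξ).trans (le_abs_self _)

lemma s5_norm_int_le {E : Type*} [NormedAddCommGroup E] [NormedSpace ℝ E] {F : ℝ → E}
    {g : ℝ → ℝ} {p q : ℝ} (hpq : p ≤ q)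
    (hg : IntervalIntegrable g volume p q)
    (hg0 : ∀ ξ ∈ Ioo p q, 0 ≤ g ξ)
    (hle : ∀ ξ ∈ Ioo p q, ‖F ξ‖ ≤ g ξ) :
    ‖∫ ξ in p..q, F ξ‖ ≤ ∫ ξ in p..q, g ξ := by
  have h := intervalIntegral.norm_integral_le_abs_of_norm_le (μ := volume) (f := F)
    (a := p) (b := q) (g := g) (by rw [uIoc_of_le hpq]; exact s5_ae_Ioc hle) hg
  have h2 : 0 ≤ ∫ ξ in p..q, g ξ :=
    intervalIntegral.integral_nonneg_of_ae_restrict hpq (s5_ae_Icc hg0)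
  rwa [abs_of_nonneg h2] at h

lemma s5_Apre {b c y d : ℝ} (hb0 : 0 ≤ b) (hb1 : b < 1) (hc0 : 0 ≤ c) (hc1 : c < 1)
    (hy : 0 ≤ y) (hd : 0 < d) :
    (y + d) ^ (max b c) - y ^ (max b c)
      ≤ d ^ (s5rho b c) * (y + d) ^ (max b c - s5rho b c) := by
  have hκ0 : 0 ≤ max b c := le_trans hb0 (le_max_left b c)
  have hκ1 : max b c < 1 := max_lt hb1 hc1
  by_cases hκ : 0 < max b c
  · have hρ : s5rho b c = min (max b c) (s5mu b c / 2) := by rw [s5rho, if_pos hκ]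
    have hρκ : s5rho b c ≤ max b c := by rw [hρ]; exact min_le_left _ _
    have hρ0 : 0 < s5rho b c := s5rho_pos hb1 hc1
    have hx : 0 < y + d := by linarith
    have h1 : (y + d) ^ (max b c) - y ^ (max b c) ≤ d ^ (max b c) := by
      have := s5_rpow_subadd hy hd.le hκ0 hκ1.le
      linarith
    have h2 : (y + d) ^ (max b c) - y ^ (max b c) ≤ (y + d) ^ (max b c) := by
      have : 0 ≤ y ^ (max b c) := Real.rpow_nonneg hy _
      linarith
    rcases le_total d (y + d) with hdx | hdx
    · calc (y + d) ^ (max b c) - y ^ (max b c) ≤ d ^ (max b c) := h1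
        _ = d ^ (s5rho b c) * d ^ (max b c - s5rho b c) := by
            rw [← Real.rpow_add hd]; ring_nf
        _ ≤ d ^ (s5rho b c) * (y + d) ^ (max b c - s5rho b c) :=
            mul_le_mul_of_nonneg_left
              (Real.rpow_le_rpow hd.le hdx (by linarith))
              (Real.rpow_nonneg hd.le _)
    · calc (y + d) ^ (max b c) - y ^ (max b c) ≤ (y + d) ^ (max b c) := h2
        _ = (y + d) ^ (s5rho b c) * (y + d) ^ (max b c - s5rho b c) := by
            rw [← Real.rpow_add hx]; ring_nf
        _ ≤ d ^ (s5rho b c) * (y + d) ^ (max b c - s5rho b c) :=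
            mul_le_mul_of_nonneg_right
              (Real.rpow_le_rpow hx.le hdx hρ0.le)
              (Real.rpow_nonneg hx.le _)
  · have hκe : max b c = 0 := le_antisymm (not_lt.mp hκ) hκ0
    rw [hκe, Real.rpow_zero, Real.rpow_zero, sub_self]
    exact mul_nonneg (Real.rpow_nonneg hd.le _) (Real.rpow_nonneg (by linarith) _)

lemma s5_key (T β γ : ℝ) (hT : 0 < T) (hβ0 : 0 ≤ β) (hβ1 : β < 1)
    (hγ0 : 0 ≤ γ) (hγ1 : γ < 1)
    (t t' : ℝ) (ht0 : 0 ≤ t) (htt' : t ≤ t') (ht'T : t' ≤ T)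
    {k : ℕ} (v : ℝ → EuclideanSpace ℝ (Fin k)) (hv : ContinuousOn v (Icc t t'))
    (M : ℝ) (hM0 : 0 ≤ M) (hM : ∀ ξ ∈ Icc t t', ‖v ξ‖ ≤ M)
    (τ τ' : ℝ) (hτ : τ ∈ Icc t t') (hτ' : τ' ∈ Icc t t') (hle : τ ≤ τ') :
    ‖((τ' - t) ^ (max β γ)) • (∫ ξ in t..τ', ((τ' - ξ) ^ (-β) * (ξ - t) ^ (-γ)) • v ξ) -
        ((τ - t) ^ (max β γ)) • ∫ ξ in t..τ, ((τ - ξ) ^ (-β) * (ξ - t) ^ (-γ)) • v ξ‖ ≤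
      M * ((s5Cf β γ * T ^ (s5mu β γ - s5rho β γ)) * (τ' - τ) ^ (s5rho β γ)
        + (T ^ (max β γ - γ) / (1-β)) * (τ' - τ) ^ (1-β)
        + (s5Cf (β + s5eta β γ) γ * T ^ (s5mu β γ - s5eta β γ)) * (τ' - τ) ^ (s5eta β γ)) := by
  have hη0 : 0 < s5eta β γ := s5eta_pos hβ1 hγ1
  have hη1 : s5eta β γ ≤ 1 := s5eta_le_one hβ0 hγ0
  have hη2 : 2 * s5eta β γ ≤ 1 - β := s5eta_le_b
  have hβη1 : β + s5eta β γ < 1 := by linarith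
  have hβη0 : 0 ≤ β + s5eta β γ := by linarith
  have hμβ : 1 - β ≤ s5mu β γ := s5mu_ge_b
  have hμ0 : 0 < s5mu β γ := s5mu_pos hβ1 hγ1
  have hρ0 : 0 < s5rho β γ := s5rho_pos hβ1 hγ1
  have hρμ : s5rho β γ ≤ s5mu β γ / 2 := s5rho_le_halfmu hβ1 hγ1
  have hκ0 : 0 ≤ max β γ := le_trans hβ0 (le_max_left β γ)
  have hκ1 : max β γ < 1 := max_lt hβ1 hγ1
  have hκγ : γ ≤ max β γ := le_max_right β γ
  have hμeq : s5mu β γ = 1 + max β γ - β - γ := rfl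
  have hCf0 : 0 ≤ s5Cf β γ := s5Cf_nonneg hβ1 hγ1
  have hCf0' : 0 ≤ s5Cf (β + s5eta β γ) γ := s5Cf_nonneg hβη1 hγ1
  have htτ : t ≤ τ := hτ.1
  have hτt' : τ ≤ t' := hτ.2
  have htτ' : t ≤ τ' := le_trans htτ hle
  have hτ't' : τ' ≤ t' := hτ'.2
  have hτ'T : τ' ≤ T := le_trans hτ't' ht'T
  have hd0 : 0 ≤ τ' - τ := by linarith
  have hRHS0 : 0 ≤ M * ((s5Cf β γ * T ^ (s5mu β γ - s5rho β γ)) * (τ' - τ) ^ (s5rho β γ)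
      + (T ^ (max β γ - γ) / (1-β)) * (τ' - τ) ^ (1-β)
      + (s5Cf (β + s5eta β γ) γ * T ^ (s5mu β γ - s5eta β γ)) * (τ' - τ) ^ (s5eta β γ)) := by
    have e1 : (0:ℝ) ≤ T ^ (s5mu β γ - s5rho β γ) := Real.rpow_nonneg hT.le _
    have e2 : (0:ℝ) ≤ T ^ (max β γ - γ) := Real.rpow_nonneg hT.le _
    have e3 : (0:ℝ) ≤ T ^ (s5mu β γ - s5eta β γ) := Real.rpow_nonneg hT.le _
    have e4 : (0:ℝ) ≤ (τ' - τ) ^ (s5rho β γ) := Real.rpow_nonneg hd0 _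
    have e5 : (0:ℝ) ≤ (τ' - τ) ^ (1-β) := Real.rpow_nonneg hd0 _
    have e6 : (0:ℝ) ≤ (τ' - τ) ^ (s5eta β γ) := Real.rpow_nonneg hd0 _
    have e7 : (0:ℝ) < 1 - β := by linarith
    apply mul_nonneg hM0
    have := mul_nonneg (mul_nonneg hCf0 e1) e4
    have := mul_nonneg (mul_nonneg hCf0' e3) e6
    have := mul_nonneg (div_nonneg e2 e7.le) e5
    linarith
  rcases eq_or_lt_of_le hle with rfl | hlt
  · rw [sub_self, norm_zero]; exact hRHS0
  -- τ < τ'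
  have hδ0 : 0 < τ' - τ := by linarith
  have hτ't : 0 < τ' - t := by linarith
  -- kernel integrability
  have hK'int : IntervalIntegrable (fun ξ => (τ' - ξ) ^ (-β) * (ξ - t) ^ (-γ)) volume t τ' :=
    s5_kernel_integrable hβ1 hγ1 htτ'
  have subIcc1 : uIcc t τ ⊆ uIcc t τ' := by
    rw [uIcc_of_le htτ, uIcc_of_le htτ']; exact Icc_subset_Icc le_rfl hle
  have subIcc2 : uIcc τ τ' ⊆ uIcc t τ' := by
    rw [uIcc_of_le hle, uIcc_of_le htτ']; exact Icc_subset_Icc htτ le_rfl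
  have hK'int1 := hK'int.mono_set subIcc1
  have hK'int2 := hK'int.mono_set subIcc2
  have hKint : IntervalIntegrable (fun ξ => (τ - ξ) ^ (-β) * (ξ - t) ^ (-γ)) volume t τ :=
    s5_kernel_integrable hβ1 hγ1 htτ
  have hKηint : IntervalIntegrable
      (fun ξ => (τ - ξ) ^ (-(β + s5eta β γ)) * (ξ - t) ^ (-γ)) volume t τ :=
    s5_kernel_integrable hβη1 hγ1 htτ
  -- measurability of v on subintervals
  have hvm : ∀ p q : ℝ, t ≤ p → q ≤ t' →
      AEStronglyMeasurable v (volume.restrict (Ioc p q)) := by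
    intro p q hp hq
    have h1 : AEStronglyMeasurable v (volume.restrict (Icc t t')) :=
      hv.aestronglyMeasurable measurableSet_Icc
    refine h1.mono_measure (Measure.restrict_mono ?_ le_rfl)
    intro x hx
    have h := mem_Ioc.mp hx
    exact mem_Icc.mpr ⟨le_trans hp h.1.le, le_trans h.2 hq⟩
  -- integrability of the vector integrands
  have hbnd' : ∀ ξ ∈ Ioo t τ', ‖((τ' - ξ) ^ (-β) * (ξ - t) ^ (-γ)) • v ξ‖
      ≤ ((τ' - ξ) ^ (-β) * (ξ - t) ^ (-γ)) * M := by
    intro ξ hξ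
    have hk : 0 ≤ (τ' - ξ) ^ (-β) * (ξ - t) ^ (-γ) :=
      mul_nonneg (Real.rpow_nonneg (by linarith [hξ.2]) _)
        (Real.rpow_nonneg (by linarith [hξ.1]) _)
    rw [norm_smul, Real.norm_eq_abs, abs_of_nonneg hk]
    exact mul_le_mul_of_nonneg_left
      (hM ξ ⟨hξ.1.le, le_trans hξ.2.le hτ't'⟩) hk
  have hFv' : IntervalIntegrable
      (fun ξ => ((τ' - ξ) ^ (-β) * (ξ - t) ^ (-γ)) • v ξ) volume t τ' :=
    s5_intInt_of_bound htτ'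
      ((hK'int.aestronglyMeasurable).smul (hvm t τ' le_rfl hτ't'))
      (hK'int.mul_const M) hbnd'
  have hFv1 := hFv'.mono_set subIcc1
  have hFv2 := hFv'.mono_set subIcc2
  have hbnd : ∀ ξ ∈ Ioo t τ, ‖((τ - ξ) ^ (-β) * (ξ - t) ^ (-γ)) • v ξ‖
      ≤ ((τ - ξ) ^ (-β) * (ξ - t) ^ (-γ)) * M := by
    intro ξ hξ
    have hk : 0 ≤ (τ - ξ) ^ (-β) * (ξ - t) ^ (-γ) :=
      mul_nonneg (Real.rpow_nonneg (by linarith [hξ.2]) _)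
        (Real.rpow_nonneg (by linarith [hξ.1]) _)
    rw [norm_smul, Real.norm_eq_abs, abs_of_nonneg hk]
    exact mul_le_mul_of_nonneg_left
      (hM ξ ⟨hξ.1.le, le_trans hξ.2.le hτt'⟩) hk
  have hFv : IntervalIntegrable
      (fun ξ => ((τ - ξ) ^ (-β) * (ξ - t) ^ (-γ)) • v ξ) volume t τ :=
    s5_intInt_of_bound htτ
      ((hKint.aestronglyMeasurable).smul (hvm t τ le_rfl hτt'))
      (hKint.mul_const M) hbnd
  -- decomposition
  have hsplit : (∫ ξ in t..τ', ((τ' - ξ) ^ (-β) * (ξ - t) ^ (-γ)) • v ξ)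
      = (∫ ξ in t..τ, ((τ' - ξ) ^ (-β) * (ξ - t) ^ (-γ)) • v ξ)
        + ∫ ξ in τ..τ', ((τ' - ξ) ^ (-β) * (ξ - t) ^ (-γ)) • v ξ :=
    (integral_add_adjacent_intervals hFv1 hFv2).symm
  have hdiff : (∫ ξ in t..τ, (((τ' - ξ) ^ (-β) - (τ - ξ) ^ (-β)) * (ξ - t) ^ (-γ)) • v ξ)
      = (∫ ξ in t..τ, ((τ' - ξ) ^ (-β) * (ξ - t) ^ (-γ)) • v ξ)
        - ∫ ξ in t..τ, ((τ - ξ) ^ (-β) * (ξ - t) ^ (-γ)) • v ξ := by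
    rw [← integral_sub hFv1 hFv]
    congr 1; funext ξ; rw [sub_mul, sub_smul]
  have decomp : ((τ' - t) ^ (max β γ)) •
        (∫ ξ in t..τ', ((τ' - ξ) ^ (-β) * (ξ - t) ^ (-γ)) • v ξ)
      - ((τ - t) ^ (max β γ)) • (∫ ξ in t..τ, ((τ - ξ) ^ (-β) * (ξ - t) ^ (-γ)) • v ξ)
      = (((τ' - t) ^ (max β γ) - (τ - t) ^ (max β γ)) •
          (∫ ξ in t..τ', ((τ' - ξ) ^ (-β) * (ξ - t) ^ (-γ)) • v ξ))
        + (((τ - t) ^ (max β γ)) • ∫ ξ in τ..τ', ((τ' - ξ) ^ (-β) * (ξ - t) ^ (-γ)) • v ξ)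
        + (((τ - t) ^ (max β γ)) •
            ∫ ξ in t..τ, (((τ' - ξ) ^ (-β) - (τ - ξ) ^ (-β)) * (ξ - t) ^ (-γ)) • v ξ) := by
    rw [hdiff, hsplit]
    module
  rw [decomp]
  have hA : ‖(((τ' - t) ^ (max β γ) - (τ - t) ^ (max β γ)) •
        (∫ ξ in t..τ', ((τ' - ξ) ^ (-β) * (ξ - t) ^ (-γ)) • v ξ))‖
      ≤ M * ((s5Cf β γ * T ^ (s5mu β γ - s5rho β γ)) * (τ' - τ) ^ (s5rho β γ)) := by
    have hI'norm : ‖∫ ξ in t..τ', ((τ' - ξ) ^ (-β) * (ξ - t) ^ (-γ)) • v ξ‖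
        ≤ (s5Cf β γ * (τ' - t) ^ (1-β-γ)) * M := by
      have h1 : ‖∫ ξ in t..τ', ((τ' - ξ) ^ (-β) * (ξ - t) ^ (-γ)) • v ξ‖
          ≤ ∫ ξ in t..τ', ((τ' - ξ) ^ (-β) * (ξ - t) ^ (-γ)) * M :=
        s5_norm_int_le htτ' (hK'int.mul_const M)
          (fun ξ hξ => mul_nonneg (mul_nonneg (Real.rpow_nonneg (by linarith [hξ.2]) _)
            (Real.rpow_nonneg (by linarith [hξ.1]) _)) hM0) hbnd'
      rw [intervalIntegral.integral_mul_const] at h1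
      refine h1.trans (mul_le_mul_of_nonneg_right ?_ hM0)
      rw [s5Cf]
      exact s5_beta_le hβ0 hβ1 hγ0 hγ1 htτ'
    have hpre : (τ' - t) ^ (max β γ) - (τ - t) ^ (max β γ)
        ≤ (τ' - τ) ^ (s5rho β γ) * (τ' - t) ^ (max β γ - s5rho β γ) := by
      have h := s5_Apre hβ0 hβ1 hγ0 hγ1 (show (0:ℝ) ≤ τ - t by linarith) hδ0
      rw [show τ - t + (τ' - τ) = τ' - t by ring] at h
      exact h
    have hpre0 : 0 ≤ (τ' - t) ^ (max β γ) - (τ - t) ^ (max β γ) :=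
      sub_nonneg.mpr (Real.rpow_le_rpow (by linarith) (by linarith) hκ0)
    have hexp : (max β γ - s5rho β γ) + (1-β-γ) = s5mu β γ - s5rho β γ := by
      rw [hμeq]; ring
    rw [norm_smul, Real.norm_eq_abs, abs_of_nonneg hpre0]
    calc ((τ' - t) ^ (max β γ) - (τ - t) ^ (max β γ)) *
          ‖∫ ξ in t..τ', ((τ' - ξ) ^ (-β) * (ξ - t) ^ (-γ)) • v ξ‖
        ≤ ((τ' - τ) ^ (s5rho β γ) * (τ' - t) ^ (max β γ - s5rho β γ)) *
            ((s5Cf β γ * (τ' - t) ^ (1-β-γ)) * M) :=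
          mul_le_mul hpre hI'norm (norm_nonneg _)
            (mul_nonneg (Real.rpow_nonneg hd0 _) (Real.rpow_nonneg hτ't.le _))
      _ = M * s5Cf β γ * ((τ' - t) ^ (max β γ - s5rho β γ) * (τ' - t) ^ (1-β-γ))
            * (τ' - τ) ^ (s5rho β γ) := by ring
      _ = M * s5Cf β γ * (τ' - t) ^ (s5mu β γ - s5rho β γ) * (τ' - τ) ^ (s5rho β γ) := by
          rw [← Real.rpow_add hτ't, hexp]
      _ ≤ M * s5Cf β γ * T ^ (s5mu β γ - s5rho β γ) * (τ' - τ) ^ (s5rho β γ) := by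
          have h4 : (τ' - t) ^ (s5mu β γ - s5rho β γ) ≤ T ^ (s5mu β γ - s5rho β γ) :=
            Real.rpow_le_rpow hτ't.le (by linarith) (by linarith)
          exact mul_le_mul_of_nonneg_right
            (mul_le_mul_of_nonneg_left h4 (mul_nonneg hM0 hCf0)) (Real.rpow_nonneg hd0 _)
      _ = M * ((s5Cf β γ * T ^ (s5mu β γ - s5rho β γ)) * (τ' - τ) ^ (s5rho β γ)) := by ring
  have hB : ‖(((τ - t) ^ (max β γ)) •
        ∫ ξ in τ..τ', ((τ' - ξ) ^ (-β) * (ξ - t) ^ (-γ)) • v ξ)‖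
      ≤ M * ((T ^ (max β γ - γ) / (1-β)) * (τ' - τ) ^ (1-β)) := by
    have h1 : ‖∫ ξ in τ..τ', ((τ' - ξ) ^ (-β) * (ξ - t) ^ (-γ)) • v ξ‖
        ≤ ∫ ξ in τ..τ', ((τ' - ξ) ^ (-β) * (ξ - t) ^ (-γ)) * M := by
      apply s5_norm_int_le hlt.le (hK'int2.mul_const M)
      · intro ξ hξ
        exact mul_nonneg (mul_nonneg (Real.rpow_nonneg (by linarith [hξ.2]) _)
          (Real.rpow_nonneg (by linarith [hξ.1]) _)) hM0
      · intro ξ hξ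
        exact hbnd' ξ ⟨lt_of_le_of_lt htτ hξ.1, hξ.2⟩
    rw [intervalIntegral.integral_mul_const] at h1
    have hmono : (∫ ξ in τ..τ', (τ - t) ^ (max β γ) * ((τ' - ξ) ^ (-β) * (ξ - t) ^ (-γ)))
        ≤ ∫ ξ in τ..τ', T ^ (max β γ - γ) * (τ' - ξ) ^ (-β) := by
      apply integral_mono_ae_restrict hlt.le (hK'int2.const_mul _)
        ((s5_intInt_right τ τ' hβ1).const_mul _)
      apply s5_ae_Icc
      intro ξ hξ
      have hξt : 0 < ξ - t := by linarith [hξ.1]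
      have e1 : (τ - t) ^ (max β γ) ≤ (ξ - t) ^ (max β γ) :=
        Real.rpow_le_rpow (by linarith) (by linarith [hξ.1]) hκ0
      have e2 : (ξ - t) ^ (max β γ) * (ξ - t) ^ (-γ) = (ξ - t) ^ (max β γ - γ) := by
        rw [← Real.rpow_add hξt]; ring_nf
      have e3 : (ξ - t) ^ (max β γ - γ) ≤ T ^ (max β γ - γ) :=
        Real.rpow_le_rpow hξt.le (by linarith [hξ.2]) (by linarith [hκγ])
      have e4 : (0:ℝ) ≤ (τ' - ξ) ^ (-β) := Real.rpow_nonneg (by linarith [hξ.2]) _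
      have e5 : (0:ℝ) ≤ (ξ - t) ^ (-γ) := Real.rpow_nonneg hξt.le _
      calc (τ - t) ^ (max β γ) * ((τ' - ξ) ^ (-β) * (ξ - t) ^ (-γ))
          = ((τ - t) ^ (max β γ) * (ξ - t) ^ (-γ)) * (τ' - ξ) ^ (-β) := by ring
        _ ≤ ((ξ - t) ^ (max β γ) * (ξ - t) ^ (-γ)) * (τ' - ξ) ^ (-β) :=
            mul_le_mul_of_nonneg_right (mul_le_mul_of_nonneg_right e1 e5) e4
        _ = (ξ - t) ^ (max β γ - γ) * (τ' - ξ) ^ (-β) := by rw [e2]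
        _ ≤ T ^ (max β γ - γ) * (τ' - ξ) ^ (-β) := mul_le_mul_of_nonneg_right e3 e4
    rw [intervalIntegral.integral_const_mul, intervalIntegral.integral_const_mul, s5_integral_right hβ1] at hmono
    rw [norm_smul, Real.norm_eq_abs, abs_of_nonneg (Real.rpow_nonneg (by linarith : (0:ℝ) ≤ τ - t) _)]
    calc (τ - t) ^ (max β γ) * ‖∫ ξ in τ..τ', ((τ' - ξ) ^ (-β) * (ξ - t) ^ (-γ)) • v ξ‖
        ≤ (τ - t) ^ (max β γ) *
            ((∫ ξ in τ..τ', (τ' - ξ) ^ (-β) * (ξ - t) ^ (-γ)) * M) :=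
          mul_le_mul_of_nonneg_left h1 (Real.rpow_nonneg (by linarith) _)
      _ = ((τ - t) ^ (max β γ) * ∫ ξ in τ..τ', (τ' - ξ) ^ (-β) * (ξ - t) ^ (-γ)) * M := by
          ring
      _ ≤ (T ^ (max β γ - γ) * ((τ' - τ) ^ (1-β) / (1-β))) * M :=
          mul_le_mul_of_nonneg_right hmono hM0
      _ = M * ((T ^ (max β γ - γ) / (1-β)) * (τ' - τ) ^ (1-β)) := by ring
  have hC : ‖(((τ - t) ^ (max β γ)) •
        ∫ ξ in t..τ, (((τ' - ξ) ^ (-β) - (τ - ξ) ^ (-β)) * (ξ - t) ^ (-γ)) • v ξ)‖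
      ≤ M * ((s5Cf (β + s5eta β γ) γ * T ^ (s5mu β γ - s5eta β γ)) * (τ' - τ) ^ (s5eta β γ)) := by
    by_cases hτeq : τ = t
    · rw [hτeq, integral_same, smul_zero, norm_zero]
      exact mul_nonneg hM0 (mul_nonneg (mul_nonneg hCf0' (Real.rpow_nonneg hT.le _))
        (Real.rpow_nonneg (by linarith : (0:ℝ) ≤ τ' - t) _))
    have hbt : 0 < τ - t := sub_pos.mpr (lt_of_le_of_ne htτ (Ne.symm hτeq))
    have h1 : ‖∫ ξ in t..τ, (((τ' - ξ) ^ (-β) - (τ - ξ) ^ (-β)) * (ξ - t) ^ (-γ)) • v ξ‖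
        ≤ ∫ ξ in t..τ,
            ((τ' - τ) ^ (s5eta β γ) * ((τ - ξ) ^ (-(β + s5eta β γ)) * (ξ - t) ^ (-γ))) * M := by
      apply s5_norm_int_le htτ ((hKηint.const_mul _).mul_const M)
      · intro ξ hξ
        exact mul_nonneg (mul_nonneg (Real.rpow_nonneg hd0 _)
          (mul_nonneg (Real.rpow_nonneg (by linarith [hξ.2]) _)
            (Real.rpow_nonneg (by linarith [hξ.1]) _))) hM0
      · intro ξ hξ
        have hτξ : 0 < τ - ξ := by linarith [hξ.2]
        have hξt : 0 < ξ - t := by linarith [hξ.1]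
        have hmono2 : (τ' - ξ) ^ (-β) ≤ (τ - ξ) ^ (-β) :=
          Real.rpow_le_rpow_of_nonpos hτξ (by linarith) (by linarith)
        have habs : |((τ' - ξ) ^ (-β) - (τ - ξ) ^ (-β)) * (ξ - t) ^ (-γ)|
            = ((τ - ξ) ^ (-β) - (τ' - ξ) ^ (-β)) * (ξ - t) ^ (-γ) := by
          rw [abs_mul, abs_of_nonneg (Real.rpow_nonneg hξt.le (-γ)),
            abs_of_nonpos (by linarith : (τ' - ξ) ^ (-β) - (τ - ξ) ^ (-β) ≤ 0)]
          ring
        have hdle : (τ - ξ) ^ (-β) - (τ' - ξ) ^ (-β)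
            ≤ (τ' - τ) ^ (s5eta β γ) * (τ - ξ) ^ (-(β + s5eta β γ)) := by
          have h := s5_rpow_neg_sub_le (a := τ - ξ) (c := τ' - ξ) hτξ (by linarith)
            hβ0 hβ1.le hη0.le hη1
          rw [show τ' - ξ - (τ - ξ) = τ' - τ by ring,
            show -β - s5eta β γ = -(β + s5eta β γ) by ring] at h
          exact h
        rw [norm_smul, Real.norm_eq_abs, habs]
        have hvle := hM ξ ⟨hξ.1.le, le_trans hξ.2.le hτt'⟩
        have hnn1 : (0:ℝ) ≤ ((τ - ξ) ^ (-β) - (τ' - ξ) ^ (-β)) * (ξ - t) ^ (-γ) :=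
          mul_nonneg (by linarith) (Real.rpow_nonneg hξt.le _)
        calc ((τ - ξ) ^ (-β) - (τ' - ξ) ^ (-β)) * (ξ - t) ^ (-γ) * ‖v ξ‖
            ≤ ((τ' - τ) ^ (s5eta β γ) * (τ - ξ) ^ (-(β + s5eta β γ))) * (ξ - t) ^ (-γ) * M := by
              apply mul_le_mul (mul_le_mul_of_nonneg_right hdle
                (Real.rpow_nonneg hξt.le _)) hvle (norm_nonneg _)
              exact mul_nonneg (mul_nonneg (Real.rpow_nonneg hd0 _)
                (Real.rpow_nonneg hτξ.le _)) (Real.rpow_nonneg hξt.le _)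
          _ = ((τ' - τ) ^ (s5eta β γ) * ((τ - ξ) ^ (-(β + s5eta β γ)) * (ξ - t) ^ (-γ))) * M := by
              ring
    rw [intervalIntegral.integral_mul_const, intervalIntegral.integral_const_mul] at h1
    have h3 : (∫ ξ in t..τ, (τ - ξ) ^ (-(β + s5eta β γ)) * (ξ - t) ^ (-γ))
        ≤ s5Cf (β + s5eta β γ) γ * (τ - t) ^ (1 - (β + s5eta β γ) - γ) := by
      rw [s5Cf]
      exact s5_beta_le hβη0 hβη1 hγ0 hγ1 htτ
    have h3nn : (0:ℝ) ≤ ∫ ξ in t..τ, (τ - ξ) ^ (-(β + s5eta β γ)) * (ξ - t) ^ (-γ) := by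
      apply intervalIntegral.integral_nonneg htτ
      intro ξ hξ
      exact mul_nonneg (Real.rpow_nonneg (by linarith [hξ.2]) _)
        (Real.rpow_nonneg (by linarith [hξ.1]) _)
    have hexp : (max β γ) + (1 - (β + s5eta β γ) - γ) = s5mu β γ - s5eta β γ := by
      rw [hμeq]; ring
    rw [norm_smul, Real.norm_eq_abs, abs_of_nonneg (Real.rpow_nonneg hbt.le _)]
    calc (τ - t) ^ (max β γ) *
          ‖∫ ξ in t..τ, (((τ' - ξ) ^ (-β) - (τ - ξ) ^ (-β)) * (ξ - t) ^ (-γ)) • v ξ‖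
        ≤ (τ - t) ^ (max β γ) * ((τ' - τ) ^ (s5eta β γ) *
            (∫ ξ in t..τ, (τ - ξ) ^ (-(β + s5eta β γ)) * (ξ - t) ^ (-γ)) * M) :=
          mul_le_mul_of_nonneg_left h1 (Real.rpow_nonneg hbt.le _)
      _ ≤ (τ - t) ^ (max β γ) * ((τ' - τ) ^ (s5eta β γ) *
            (s5Cf (β + s5eta β γ) γ * (τ - t) ^ (1 - (β + s5eta β γ) - γ)) * M) := by
          apply mul_le_mul_of_nonneg_left _ (Real.rpow_nonneg hbt.le _)
          exact mul_le_mul_of_nonneg_right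
            (mul_le_mul_of_nonneg_left h3 (Real.rpow_nonneg hd0 _)) hM0
      _ = M * s5Cf (β + s5eta β γ) γ *
            ((τ - t) ^ (max β γ) * (τ - t) ^ (1 - (β + s5eta β γ) - γ)) *
            (τ' - τ) ^ (s5eta β γ) := by ring
      _ = M * s5Cf (β + s5eta β γ) γ * (τ - t) ^ (s5mu β γ - s5eta β γ) *
            (τ' - τ) ^ (s5eta β γ) := by rw [← Real.rpow_add hbt, hexp]
      _ ≤ M * s5Cf (β + s5eta β γ) γ * T ^ (s5mu β γ - s5eta β γ) *
            (τ' - τ) ^ (s5eta β γ) := by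
          have h4 : (τ - t) ^ (s5mu β γ - s5eta β γ) ≤ T ^ (s5mu β γ - s5eta β γ) :=
            Real.rpow_le_rpow hbt.le (by linarith) (by linarith)
          exact mul_le_mul_of_nonneg_right
            (mul_le_mul_of_nonneg_left h4 (mul_nonneg hM0 hCf0')) (Real.rpow_nonneg hd0 _)
      _ = M * ((s5Cf (β + s5eta β γ) γ * T ^ (s5mu β γ - s5eta β γ)) *
            (τ' - τ) ^ (s5eta β γ)) := by ring
  calc ‖_ + _ + _‖ ≤ _ := norm_add₃_le
    _ ≤ _ := add_le_add (add_le_add hA hB) hC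
    _ = M * ((s5Cf β γ * T ^ (s5mu β γ - s5rho β γ)) * (τ' - τ) ^ (s5rho β γ)
        + (T ^ (max β γ - γ) / (1-β)) * (τ' - τ) ^ (1-β)
        + (s5Cf (β + s5eta β γ) γ * T ^ (s5mu β γ - s5eta β γ)) * (τ' - τ) ^ (s5eta β γ)) := by
      ring

theorem stmt5 (T β γ : ℝ) (hT : 0 < T) (hβ : β ∈ Set.Ico (0 : ℝ) 1)
    (hγ : γ ∈ Set.Ico (0 : ℝ) 1) :
    ∃ ω : ℝ → ℝ, Continuous ω ∧ Monotone ω ∧ ω 0 = 0 ∧ (∀ δ, 0 ≤ ω δ) ∧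
      ∀ t t' : ℝ, 0 ≤ t → t ≤ t' → t' ≤ T →
        ∀ (k : ℕ) (v : ℝ → EuclideanSpace ℝ (Fin k)), ContinuousOn v (Set.Icc t t') →
          ∀ τ ∈ Set.Icc t t', ∀ τ' ∈ Set.Icc t t',
            ‖((τ' - t) ^ (max β γ)) •
                  (∫ ξ in t..τ', ((τ' - ξ) ^ (-β) * (ξ - t) ^ (-γ)) • v ξ) -
                ((τ - t) ^ (max β γ)) •
                  ∫ ξ in t..τ, ((τ - ξ) ^ (-β) * (ξ - t) ^ (-γ)) • v ξ‖ ≤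
              sSup ((fun ξ => ‖v ξ‖) '' Set.Icc t t') * ω (|τ' - τ|) := by
  obtain ⟨hβ0, hβ1⟩ := hβ
  obtain ⟨hγ0, hγ1⟩ := hγ
  have hη0 : 0 < s5eta β γ := s5eta_pos hβ1 hγ1
  have hρ0 : 0 < s5rho β γ := s5rho_pos hβ1 hγ1
  have hβ'0 : (0:ℝ) < 1 - β := by linarith
  have hCf0 : 0 ≤ s5Cf β γ := s5Cf_nonneg hβ1 hγ1
  have hβη1 : β + s5eta β γ < 1 := by linarith [s5eta_le_b (b := β) (c := γ)]
  have hCf0' : 0 ≤ s5Cf (β + s5eta β γ) γ := s5Cf_nonneg hβη1 hγ1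
  have hT1 : (0:ℝ) ≤ T ^ (s5mu β γ - s5rho β γ) := Real.rpow_nonneg hT.le _
  have hT2 : (0:ℝ) ≤ T ^ (max β γ - γ) := Real.rpow_nonneg hT.le _
  have hT3 : (0:ℝ) ≤ T ^ (s5mu β γ - s5eta β γ) := Real.rpow_nonneg hT.le _
  have homega : s5omega β γ T = fun d =>
      (s5Cf β γ * T ^ (s5mu β γ - s5rho β γ)) * (max d 0) ^ (s5rho β γ)
      + (T ^ (max β γ - γ) / (1-β)) * (max d 0) ^ (1-β)
      + (s5Cf (β + s5eta β γ) γ * T ^ (s5mu β γ - s5eta β γ)) * (max d 0) ^ (s5eta β γ) := by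
    funext d; rw [s5omega]
  refine ⟨s5omega β γ T, ?_, ?_, ?_, ?_, ?_⟩
  · -- continuity
    rw [homega]
    have hc : ∀ (C e : ℝ), 0 ≤ e → Continuous (fun d : ℝ => C * (max d 0) ^ e) := by
      intro C e he
      exact continuous_const.mul ((Real.continuous_rpow_const he).comp
        (continuous_id.max continuous_const))
    exact ((hc _ _ hρ0.le).add (hc _ _ hβ'0.le)).add (hc _ _ hη0.le)
  · -- monotone
    intro x y hxy
    rw [homega]
    have hmx : (0:ℝ) ≤ max x 0 := le_max_right x 0
    have hmm : max x 0 ≤ max y 0 := max_le_max hxy le_rfl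
    have f1 : ∀ e : ℝ, 0 ≤ e → (max x 0) ^ e ≤ (max y 0) ^ e := fun e he =>
      Real.rpow_le_rpow hmx hmm he
    dsimp only
    gcongr ?_ + ?_ + ?_
    · exact mul_le_mul_of_nonneg_left (f1 _ hρ0.le) (mul_nonneg hCf0 hT1)
    · exact mul_le_mul_of_nonneg_left (f1 _ hβ'0.le) (div_nonneg hT2 hβ'0.le)
    · exact mul_le_mul_of_nonneg_left (f1 _ hη0.le) (mul_nonneg hCf0' hT3)
  · -- zero
    rw [homega]
    simp only [max_self]
    rw [Real.zero_rpow (ne_of_gt hρ0), Real.zero_rpow (ne_of_gt hβ'0),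
      Real.zero_rpow (ne_of_gt hη0)]
    ring
  · -- nonneg
    intro d
    rw [homega]
    have hmx : (0:ℝ) ≤ max d 0 := le_max_right d 0
    dsimp only
    have n1 := mul_nonneg (mul_nonneg hCf0 hT1) (Real.rpow_nonneg hmx (s5rho β γ))
    have n2 := mul_nonneg (div_nonneg hT2 hβ'0.le) (Real.rpow_nonneg hmx (1-β))
    have n3 := mul_nonneg (mul_nonneg hCf0' hT3) (Real.rpow_nonneg hmx (s5eta β γ))
    linarith
  · -- the main estimate
    intro t t' ht0 htt' ht'T k v hv τ hτ τ' hτ'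
    have hbdd : BddAbove ((fun ξ => ‖v ξ‖) '' Set.Icc t t') :=
      isCompact_Icc.bddAbove_image hv.norm
    set M := sSup ((fun ξ => ‖v ξ‖) '' Set.Icc t t') with hMdef
    have hMb : ∀ ξ ∈ Icc t t', ‖v ξ‖ ≤ M := fun ξ hξ => le_csSup hbdd ⟨ξ, hξ, rfl⟩
    have hM0 : 0 ≤ M := le_trans (norm_nonneg (v t)) (hMb t ⟨le_rfl, htt'⟩)
    rcases le_total τ τ' with h | h
    · have key := s5_key T β γ hT hβ0 hβ1 hγ0 hγ1 t t' ht0 htt' ht'T v hv M hM0 hMb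
        τ τ' hτ hτ' h
      have habs : |τ' - τ| = τ' - τ := abs_of_nonneg (by linarith)
      have homega2 : s5omega β γ T |τ' - τ|
          = (s5Cf β γ * T ^ (s5mu β γ - s5rho β γ)) * (τ' - τ) ^ (s5rho β γ)
            + (T ^ (max β γ - γ) / (1-β)) * (τ' - τ) ^ (1-β)
            + (s5Cf (β + s5eta β γ) γ * T ^ (s5mu β γ - s5eta β γ)) * (τ' - τ) ^ (s5eta β γ) := by
        rw [habs, s5omega, max_eq_left (by linarith : (0:ℝ) ≤ τ' - τ)]
      rw [homega2]
      exact key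
    · have key := s5_key T β γ hT hβ0 hβ1 hγ0 hγ1 t t' ht0 htt' ht'T v hv M hM0 hMb
        τ' τ hτ' hτ h
      have habs : |τ' - τ| = τ - τ' := by rw [abs_sub_comm]; exact abs_of_nonneg (by linarith)
      have homega2 : s5omega β γ T |τ' - τ|
          = (s5Cf β γ * T ^ (s5mu β γ - s5rho β γ)) * (τ - τ') ^ (s5rho β γ)
            + (T ^ (max β γ - γ) / (1-β)) * (τ - τ') ^ (1-β)
            + (s5Cf (β + s5eta β γ) γ * T ^ (s5mu β γ - s5eta β γ)) * (τ - τ') ^ (s5eta β γ) := by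
        rw [habs, s5omega, max_eq_left (by linarith : (0:ℝ) ≤ τ - τ')]
      rw [homega2, norm_sub_rev]
      exact key
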